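/- Let (π_k)_{k ∈ ℕ} be a sequence of measures on a measurable space E, let B ⊆ E be measurable with 0 < π_k(B) < ∞ for every k, and let A₁, …, A_n ⊆ B be pairwise disjoint measurable sets with π_k(A_i) > 0 for every k and every i ∈ {1, …, n}. Suppose that for each i the limit ν_i := lim_{k → ∞} π_k(A_i)/π_k(B) exists, lies in [0, 1), and that Σ_{i=1}^n ν_i = 1. Then for any a₁, …, a_n ≥ 0 with Σ_{i=1}^n a_i = 1, one has lim_{k → ∞} d_TV(Σ_{i=1}^n a_i π_k^{A_i}, π_k^B) = (1/2) Σ_{i=1}^n |a_i − ν_i|. -/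

import Mathlib

open MeasureTheory Finset Filter Topology

/-- The value on the set `S` of the measure `π` conditioned on `A`:
`π^A(S) = π(S ∩ A) / π(A)`. -/
noncomputable def condMeas {E : Type*} [MeasurableSpace E]
    (π : Measure E) (A S : Set E) : ℝ :=
  (π (S ∩ A)).toReal / (π A).toReal

private lemma mul_le_max_aux {c t : ℝ} (h0 : 0 ≤ t) (h1 : t ≤ 1) :
    c * t ≤ max c 0 := by
  rcases le_total c 0 with hc | hc
  · exact le_trans (mul_nonpos_iff.mpr (Or.inr ⟨hc, h0⟩)) (le_max_right _ _)
  · exact le_trans (mul_le_of_le_one_right hc h1) (le_max_left _ _)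

private lemma dTV_sup_eq_max_aux {E : Type*} [MeasurableSpace E]
    (m : Measure E) (B : Set E) (hB : MeasurableSet B)
    (hBpos : 0 < m B) (hBfin : m B < ⊤)
    (n : ℕ) (A : Fin n → Set E)
    (hAmeas : ∀ i, MeasurableSet (A i))
    (hAB : ∀ i, A i ⊆ B)
    (hAdisj : Pairwise (Function.onFun Disjoint A))
    (hApos : ∀ i, 0 < m (A i))
    (a : Fin n → ℝ) :
    (⨆ F : {F : Set E // MeasurableSet F},
        |(∑ i, a i * condMeas m (A i) F.1) - condMeas m B F.1|)
      = max (∑ i, max (a i - (m (A i)).toReal / (m B).toReal) 0)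
          ((∑ i, max ((m (A i)).toReal / (m B).toReal - a i) 0)
            + (1 - ∑ i, (m (A i)).toReal / (m B).toReal)) := by
  classical
  set p : Fin n → ℝ := fun i => (m (A i)).toReal / (m B).toReal with hp
  have hBr : 0 < (m B).toReal := ENNReal.toReal_pos hBpos.ne' hBfin.ne
  have hAfin : ∀ i, m (A i) < ⊤ := fun i => lt_of_le_of_lt (measure_mono (hAB i)) hBfin
  have hAr : ∀ i, 0 < (m (A i)).toReal :=
    fun i => ENNReal.toReal_pos (hApos i).ne' (hAfin i).ne
  set U : Set E := ⋃ i, A i with hUdef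
  have hUmeas : MeasurableSet U := MeasurableSet.iUnion hAmeas
  have hUB : U ⊆ B := Set.iUnion_subset hAB
  set R : Set E := B \ U with hRdef
  have hRfin : m R < ⊤ := lt_of_le_of_lt (measure_mono Set.diff_subset) hBfin
  set r : ℝ := (m R).toReal / (m B).toReal with hrdef
  -- key decomposition
  have key : ∀ F : Set E, MeasurableSet F →
      (m (F ∩ B)).toReal = (∑ i, (m (F ∩ A i)).toReal) + (m (F ∩ R)).toReal := by
    intro F hF
    have h1 : m ((F ∩ B) ∩ U) + m ((F ∩ B) \ U) = m (F ∩ B) :=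
      measure_inter_add_diff _ hUmeas
    have h2 : (F ∩ B) ∩ U = F ∩ U := by
      rw [Set.inter_assoc, Set.inter_eq_right.mpr hUB]
    have h3 : (F ∩ B) \ U = F ∩ R := by
      rw [Set.inter_diff_assoc]
    have h4 : m (F ∩ U) = ∑ i, m (F ∩ A i) := by
      have hFc : F ∩ U = ⋃ i, F ∩ A i := by rw [hUdef, Set.inter_iUnion]
      rw [hFc, measure_iUnion
        (fun i j hij => (hAdisj hij).mono Set.inter_subset_right Set.inter_subset_right)
        (fun i => hF.inter (hAmeas i)), tsum_fintype]
    rw [← h1, h2, h3, h4, ENNReal.toReal_add, ENNReal.toReal_sum]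
    · exact fun i _ =>
        (lt_of_le_of_lt (measure_mono Set.inter_subset_right) (hAfin i)).ne
    · exact (ENNReal.sum_lt_top.mpr fun i _ =>
        lt_of_le_of_lt (measure_mono Set.inter_subset_right) (hAfin i)).ne
    · exact (lt_of_le_of_lt (measure_mono Set.inter_subset_right) hRfin).ne
  -- sum of p's plus r equals 1
  have hsum1 : (∑ i, p i) + r = 1 := by
    have hk := key Set.univ MeasurableSet.univ
    simp only [Set.univ_inter] at hk
    rw [hp, hrdef, ← Finset.sum_div, ← add_div, div_eq_one_iff_eq hBr.ne']
    exact hk.symm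
  -- formula for the difference
  have hd : ∀ F : Set E, MeasurableSet F →
      (∑ i, a i * condMeas m (A i) F) - condMeas m B F
        = (∑ i, (a i - p i) * ((m (F ∩ A i)).toReal / (m (A i)).toReal))
          - (m (F ∩ R)).toReal / (m B).toReal := by
    intro F hF
    have hc : condMeas m B F
        = (∑ i, p i * ((m (F ∩ A i)).toReal / (m (A i)).toReal))
          + (m (F ∩ R)).toReal / (m B).toReal := by
      unfold condMeas
      rw [key F hF, add_div, Finset.sum_div]
      congr 1
      refine Finset.sum_congr rfl fun i _ => ?_
      rw [hp]
      rw [div_mul_div_comm, mul_comm ((m (A i)).toReal) ((m (F ∩ A i)).toReal),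
        mul_div_mul_right _ _ (hAr i).ne']
    rw [hc]
    unfold condMeas
    have hsplit : ∑ i, (a i - p i) * ((m (F ∩ A i)).toReal / (m (A i)).toReal)
        = (∑ i, a i * ((m (F ∩ A i)).toReal / (m (A i)).toReal))
          - ∑ i, p i * ((m (F ∩ A i)).toReal / (m (A i)).toReal) := by
      rw [← Finset.sum_sub_distrib]
      exact Finset.sum_congr rfl fun i _ => by ring
    rw [hsplit]
    ring
  have ht0 : ∀ (F : Set E) i, 0 ≤ (m (F ∩ A i)).toReal / (m (A i)).toReal :=
    fun F i => div_nonneg ENNReal.toReal_nonneg ENNReal.toReal_nonneg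
  have ht1 : ∀ (F : Set E) i, (m (F ∩ A i)).toReal / (m (A i)).toReal ≤ 1 :=
    fun F i => div_le_one_of_le₀
      (ENNReal.toReal_mono (hAfin i).ne (measure_mono Set.inter_subset_right))
      ENNReal.toReal_nonneg
  have hr0 : 0 ≤ r := div_nonneg ENNReal.toReal_nonneg ENNReal.toReal_nonneg
  -- upper bound
  have hub : ∀ F : {F : Set E // MeasurableSet F},
      |(∑ i, a i * condMeas m (A i) F.1) - condMeas m B F.1|
        ≤ max (∑ i, max (a i - p i) 0)
            ((∑ i, max (p i - a i) 0) + (1 - ∑ i, p i)) := by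
    rintro ⟨F, hF⟩
    rw [hd F hF]
    have hx0 : 0 ≤ (m (F ∩ R)).toReal / (m B).toReal :=
      div_nonneg ENNReal.toReal_nonneg ENNReal.toReal_nonneg
    have hxr : (m (F ∩ R)).toReal / (m B).toReal ≤ r := by
      rw [hrdef]
      gcongr <;> first
        | exact hRfin.ne
        | exact Set.inter_subset_right
    have hpos : ∑ i, (a i - p i) * ((m (F ∩ A i)).toReal / (m (A i)).toReal)
        ≤ ∑ i, max (a i - p i) 0 :=
      Finset.sum_le_sum fun i _ => mul_le_max_aux (ht0 F i) (ht1 F i)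
    have hneg : -(∑ i, (a i - p i) * ((m (F ∩ A i)).toReal / (m (A i)).toReal))
        ≤ ∑ i, max (p i - a i) 0 := by
      rw [← Finset.sum_neg_distrib]
      refine Finset.sum_le_sum fun i _ => ?_
      have := mul_le_max_aux (c := p i - a i) (ht0 F i) (ht1 F i)
      nlinarith [this]
    have hrr : r = 1 - ∑ i, p i := by linarith
    rw [abs_le]
    constructor
    · have := le_max_right (∑ i, max (a i - p i) 0)
        ((∑ i, max (p i - a i) 0) + (1 - ∑ i, p i))
      nlinarith [hneg, hxr, hrr ▸ hxr]
    · have := le_max_left (∑ i, max (a i - p i) 0)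
        ((∑ i, max (p i - a i) 0) + (1 - ∑ i, p i))
      nlinarith [hpos, hx0]
  haveI : Nonempty {F : Set E // MeasurableSet F} := ⟨⟨∅, MeasurableSet.empty⟩⟩
  have hbdd : BddAbove (Set.range fun F : {F : Set E // MeasurableSet F} =>
      |(∑ i, a i * condMeas m (A i) F.1) - condMeas m B F.1|) := by
    refine ⟨max (∑ i, max (a i - p i) 0)
      ((∑ i, max (p i - a i) 0) + (1 - ∑ i, p i)), ?_⟩
    rintro y ⟨F, rfl⟩
    exact hub F
  -- witnesses
  set s : Finset (Fin n) := Finset.univ.filter (fun i => p i ≤ a i) with hsdef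
  set F₁ : Set E := ⋃ i ∈ s, A i with hF₁def
  have hF₁meas : MeasurableSet F₁ := s.measurableSet_biUnion fun i _ => hAmeas i
  have hF₁U : F₁ ⊆ U := by
    rw [hF₁def, hUdef]
    exact Set.iUnion₂_subset fun i _ => Set.subset_iUnion A i
  have hsub : ∀ i ∈ s, A i ⊆ F₁ := by
    intro i hi
    rw [hF₁def]
    exact Set.subset_iUnion₂ (s := fun i _ => A i) i hi
  have hF₁in : ∀ i ∈ s, F₁ ∩ A i = A i :=
    fun i hi => Set.inter_eq_right.mpr (hsub i hi)
  have hF₁out : ∀ i ∉ s, F₁ ∩ A i = ∅ := by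
    intro i hi
    have hdisj : Disjoint F₁ (A i) := by
      rw [hF₁def]
      refine Set.disjoint_left.mpr fun x hx hxi => ?_
      simp only [Set.mem_iUnion] at hx
      obtain ⟨j, hj, hxj⟩ := hx
      exact Set.disjoint_left.mp (hAdisj (fun h : j = i => hi (h ▸ hj))) hxj hxi
    exact hdisj.inter_eq
  have hF₁R : F₁ ∩ R = ∅ :=
    ((Set.disjoint_sdiff_right (s := U) (t := B)).mono_left hF₁U).inter_eq
  -- lower bound 1
  have hval₁ : (∑ i, a i * condMeas m (A i) F₁) - condMeas m B F₁
      = ∑ i, max (a i - p i) 0 := by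
    rw [hd F₁ hF₁meas, hF₁R]
    simp only [measure_empty, ENNReal.toReal_zero, zero_div, sub_zero]
    refine Finset.sum_congr rfl fun i _ => ?_
    by_cases hi : p i ≤ a i
    · have his : i ∈ s := by simp [hsdef, hi]
      rw [hF₁in i his, div_self (hAr i).ne', mul_one,
        max_eq_left (sub_nonneg.mpr hi)]
    · have his : i ∉ s := by simp [hsdef, hi]
      rw [hF₁out i his]
      simp [max_eq_right (sub_nonpos.mpr (le_of_not_ge hi))]
  have hle₁ : (∑ i, max (a i - p i) 0)
      ≤ ⨆ F : {F : Set E // MeasurableSet F},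
          |(∑ i, a i * condMeas m (A i) F.1) - condMeas m B F.1| := by
    refine le_trans ?_ (le_ciSup hbdd ⟨F₁, hF₁meas⟩)
    rw [hval₁]
    exact le_abs_self _
  -- lower bound 2
  set F₂ : Set E := B \ F₁ with hF₂def
  have hF₂meas : MeasurableSet F₂ := hB.diff hF₁meas
  have hF₂in : ∀ i ∈ s, F₂ ∩ A i = ∅ :=
    fun i hi => (Set.disjoint_sdiff_left.mono_right (hsub i hi)).inter_eq
  have hF₂out : ∀ i ∉ s, F₂ ∩ A i = A i := by
    intro i hi
    have hd1 : Disjoint F₁ (A i) := Set.disjoint_iff_inter_eq_empty.mpr (hF₁out i hi)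
    exact Set.inter_eq_right.mpr (Set.subset_diff.mpr ⟨hAB i, hd1.symm⟩)
  have hF₂R : F₂ ∩ R = R :=
    Set.inter_eq_right.mpr (Set.diff_subset_diff_right hF₁U)
  have hval₂ : (∑ i, a i * condMeas m (A i) F₂) - condMeas m B F₂
      = -((∑ i, max (p i - a i) 0) + (1 - ∑ i, p i)) := by
    rw [hd F₂ hF₂meas, hF₂R]
    have hrr : r = 1 - ∑ i, p i := by linarith
    have hsum₂ : ∑ i, (a i - p i) * ((m (F₂ ∩ A i)).toReal / (m (A i)).toReal)
        = -∑ i, max (p i - a i) 0 := by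
      rw [← Finset.sum_neg_distrib]
      refine Finset.sum_congr rfl fun i _ => ?_
      by_cases hi : p i ≤ a i
      · have his : i ∈ s := by simp [hsdef, hi]
        rw [hF₂in i his]
        simp [max_eq_right (sub_nonpos.mpr hi)]
      · have his : i ∉ s := by simp [hsdef, hi]
        rw [hF₂out i his, div_self (hAr i).ne', mul_one,
          max_eq_left (sub_nonneg.mpr (le_of_not_ge hi))]
        ring
    rw [hsum₂, ← hrdef, hrr]
    ring
  have hle₂ : ((∑ i, max (p i - a i) 0) + (1 - ∑ i, p i))
      ≤ ⨆ F : {F : Set E // MeasurableSet F},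
          |(∑ i, a i * condMeas m (A i) F.1) - condMeas m B F.1| := by
    refine le_trans ?_ (le_ciSup hbdd ⟨F₂, hF₂meas⟩)
    rw [hval₂, abs_neg]
    exact le_abs_self _
  exact le_antisymm (ciSup_le hub) (max_le hle₁ hle₂)

theorem dTV_mixture_cond_tendsto_of_sum_one {E : Type*} [MeasurableSpace E]
    (π : ℕ → Measure E) (B : Set E) (hB : MeasurableSet B)
    (hBpos : ∀ k, 0 < π k B) (hBfin : ∀ k, π k B < ⊤)
    (n : ℕ) (A : Fin n → Set E)
    (hAmeas : ∀ i, MeasurableSet (A i))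
    (hAB : ∀ i, A i ⊆ B)
    (hAdisj : Pairwise (Function.onFun Disjoint A))
    (hApos : ∀ k i, 0 < π k (A i))
    (ν : Fin n → ℝ)
    (hν : ∀ i, Tendsto (fun k => (π k (A i)).toReal / (π k B).toReal)
      atTop (𝓝 (ν i)))
    (hνIco : ∀ i, ν i ∈ Set.Ico (0 : ℝ) 1)
    (hνsum : ∑ i, ν i = 1)
    (a : Fin n → ℝ) (ha : ∀ i, 0 ≤ a i) (hasum : ∑ i, a i = 1) :
    Tendsto (fun k =>
        ⨆ F : {F : Set E // MeasurableSet F},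
          |(∑ i, a i * condMeas (π k) (A i) F.1) - condMeas (π k) B F.1|)
      atTop
      (𝓝 ((1 / 2) * ∑ i, |a i - ν i|)) := by
  have heq : ∀ k,
      (⨆ F : {F : Set E // MeasurableSet F},
        |(∑ i, a i * condMeas (π k) (A i) F.1) - condMeas (π k) B F.1|)
      = max (∑ i, max (a i - (π k (A i)).toReal / (π k B).toReal) 0)
          ((∑ i, max ((π k (A i)).toReal / (π k B).toReal - a i) 0)
            + (1 - ∑ i, (π k (A i)).toReal / (π k B).toReal)) :=
    fun k => dTV_sup_eq_max_aux (π k) B hB (hBpos k) (hBfin k) n A hAmeas hAB hAdisj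
      (hApos k) a
  have hlim : Tendsto (fun k =>
      max (∑ i, max (a i - (π k (A i)).toReal / (π k B).toReal) 0)
        ((∑ i, max ((π k (A i)).toReal / (π k B).toReal - a i) 0)
          + (1 - ∑ i, (π k (A i)).toReal / (π k B).toReal)))
      atTop (𝓝 (max (∑ i, max (a i - ν i) 0)
        ((∑ i, max (ν i - a i) 0) + (1 - ∑ i, ν i)))) := by
    refine Tendsto.max ?_ (Tendsto.add ?_ ?_)
    · exact tendsto_finset_sum _ fun i _ =>
        (tendsto_const_nhds.sub (hν i)).max tendsto_const_nhds
    · exact tendsto_finset_sum _ fun i _ =>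
        ((hν i).sub tendsto_const_nhds).max tendsto_const_nhds
    · exact tendsto_const_nhds.sub (tendsto_finset_sum _ fun i _ => hν i)
  have hval : max (∑ i, max (a i - ν i) 0)
      ((∑ i, max (ν i - a i) 0) + (1 - ∑ i, ν i))
      = (1 / 2) * ∑ i, |a i - ν i| := by
    rw [hνsum, sub_self, add_zero]
    have h1 : (∑ i, max (a i - ν i) 0) + (∑ i, max (ν i - a i) 0)
        = ∑ i, |a i - ν i| := by
      rw [← Finset.sum_add_distrib]
      refine Finset.sum_congr rfl fun i _ => ?_
      rcases le_total (a i) (ν i) with h | h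
      · rw [max_eq_right (sub_nonpos.mpr h), max_eq_left (sub_nonneg.mpr h),
          abs_of_nonpos (sub_nonpos.mpr h)]
        ring
      · rw [max_eq_left (sub_nonneg.mpr h), max_eq_right (sub_nonpos.mpr h),
          abs_of_nonneg (sub_nonneg.mpr h)]
        ring
    have h2 : (∑ i, max (a i - ν i) 0) - (∑ i, max (ν i - a i) 0) = 0 := by
      rw [← Finset.sum_sub_distrib]
      have : ∀ i ∈ Finset.univ, max (a i - ν i) 0 - max (ν i - a i) 0 = a i - ν i := by
        intro i _
        rcases le_total (a i) (ν i) with h | h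
        · rw [max_eq_right (sub_nonpos.mpr h), max_eq_left (sub_nonneg.mpr h)]; ring
        · rw [max_eq_left (sub_nonneg.mpr h), max_eq_right (sub_nonpos.mpr h)]; ring
      rw [Finset.sum_congr rfl this, Finset.sum_sub_distrib, hasum, hνsum, sub_self]
    have hmax : max (∑ i, max (a i - ν i) 0) (∑ i, max (ν i - a i) 0)
        = ∑ i, max (a i - ν i) 0 := by
      rw [max_eq_left]; linarith
    rw [hmax]; linarith
  rw [← hval]
  exact hlim.congr fun k => (heq k).symm
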